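/- arXiv:2209.12477 — 2 statements merged into one kernel-verified Lean document; each statement's English description precedes it below -/
import Mathlib

section
/- Let n ≥ 4. Define the shifted-addition high-bit function sAdd^n_{n−1} : (Fin n → Bool) × (Fin n → Bool) × Fin (n+1) → Bool by sAdd^n_{n−1}(A, B, D) = bit n−1 of (val A + (val B) / 2^D) (integer division, val as binary value with bit 0 least significant). Then for every subset L of the 2n operand variables (indices of A and B) with |L| = n, there exists a fooling set for sAdd^n_{n−1} with respect to the partition (L, Lᶜ) of size at least 2^{⌈n/4⌉ / 2} (in particular of size exponential in n). -/
def bitVal {n : ℕ} (w : Fin n → Bool) : ℕ := ∑ i, if w i then 2 ^ (i : ℕ) else 0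

def sAddHigh {n : ℕ} (A B : Fin n → Bool) (D : Fin (n + 1)) : Bool :=
  Nat.testBit (bitVal A + bitVal B / 2 ^ (D : ℕ)) (n - 1)

def combine {n : ℕ} (L : Finset (Fin n × Bool))
    (l : {x // x ∈ L} → Bool) (r : {x // x ∈ Lᶜ} → Bool) (x : Fin n × Bool) : Bool :=
  if h : x ∈ L then l ⟨x, h⟩ else r ⟨x, Finset.mem_compl.mpr h⟩

def bitValN (g : ℕ → Bool) (n : ℕ) : ℕ := ∑ i ∈ Finset.range n, if g i then 2 ^ i else 0



lemma sum_range_two_pow (m : ℕ) : ∑ i ∈ Finset.range m, 2 ^ i = 2 ^ m - 1 := by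
  induction m with
  | zero => simp
  | succ m ih => rw [Finset.sum_range_succ, ih]; have := Nat.one_le_two_pow (n := m); omega

lemma bitValN_lt (g : ℕ → Bool) (n : ℕ) : bitValN g n < 2 ^ n := by
  have h : bitValN g n ≤ ∑ i ∈ Finset.range n, 2 ^ i := by
    apply Finset.sum_le_sum; intro i _; split <;> simp
  rw [sum_range_two_pow] at h
  have := Nat.one_le_two_pow (n := n); omega

lemma bitValN_div (g : ℕ → Bool) (n d : ℕ) (hd : d ≤ n) :
    bitValN g n / 2 ^ d = bitValN (fun i => g (i + d)) (n - d) := by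
  have hsplit : bitValN g n = bitValN g d + ∑ i ∈ Finset.Ico d n, if g i then 2 ^ i else 0 := by
    rw [bitValN, bitValN, ← Finset.sum_range_add_sum_Ico _ hd]
  have hIco : ∑ i ∈ Finset.Ico d n, (if g i then 2 ^ i else 0)
      = (bitValN (fun i => g (i + d)) (n - d)) * 2 ^ d := by
    rw [Finset.sum_Ico_eq_sum_range, bitValN, Finset.sum_mul]
    apply Finset.sum_congr rfl
    intro i _
    rw [Nat.add_comm d i]
    split <;> [rw [pow_add]; simp]
  rw [hsplit, hIco, Nat.add_mul_div_right _ _ (Nat.two_pow_pos d),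
    Nat.div_eq_of_lt (bitValN_lt g d)]
  simp

lemma testBit_bitValN (g : ℕ → Bool) (n i : ℕ) (h : i < n) : (bitValN g n).testBit i = g i := by
  induction n with
  | zero => omega
  | succ n ih =>
    have hstep : bitValN g (n+1) = bitValN g n + if g n then 2 ^ n else 0 := by
      rw [bitValN, Finset.sum_range_succ]; rfl
    rcases Nat.lt_or_ge i n with hi | hi
    · rw [hstep]
      by_cases hg : g n
      · rw [if_pos hg, ← ih hi]
        rw [Nat.testBit_eq_decide_div_mod_eq, Nat.testBit_eq_decide_div_mod_eq]
        have hdvd : (2:ℕ) ^ i ∣ 2 ^ n := pow_dvd_pow 2 (le_of_lt hi)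
        rw [Nat.add_div_of_dvd_left hdvd]
        have : (2:ℕ) ^ n / 2 ^ i = 2 ^ (n - i) := by
          rw [Nat.pow_div (le_of_lt hi) (by norm_num)]
        rw [this]
        have h2 : (2:ℕ) ^ (n - i) % 2 = 0 := by
          have : n - i ≠ 0 := by omega
          rcases Nat.exists_eq_succ_of_ne_zero this with ⟨k, hk⟩
          rw [hk, pow_succ, Nat.mul_mod_left]
        exact decide_eq_decide.mpr (by omega)
      · rw [if_neg hg, Nat.add_zero]; exact ih hi
    · have hin : i = n := by omega
      subst hin
      rw [hstep]
      by_cases hg : g i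
      · rw [if_pos hg, Nat.testBit_eq_decide_div_mod_eq]
        have hlt := bitValN_lt g i
        have : (bitValN g i + 2 ^ i) / 2 ^ i = 1 := by
          rw [Nat.add_div_of_dvd_left dvd_rfl, Nat.div_eq_of_lt hlt, Nat.div_self (Nat.two_pow_pos i)]
        rw [this]; simp [hg]
      · rw [if_neg hg, Nat.add_zero]
        rw [Nat.testBit_lt_two_pow (bitValN_lt g i)]; simp [hg]

def inL {n : ℕ} (L : Finset (Fin n × Bool)) (i : ℕ) (c : Bool) : Prop :=
  ∃ h : i < n, (⟨i, h⟩, c) ∈ L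

instance {n : ℕ} (L : Finset (Fin n × Bool)) (i : ℕ) (c : Bool) : Decidable (inL L i c) := by
  unfold inL; exact exists_prop_decidable _

def gA {n : ℕ} (L : Finset (Fin n × Bool)) (S : Finset ℕ)
    (u v : {i // i ∈ S} → Bool) (i : ℕ) : Bool :=
  if h : i ∈ S then (if inL L i false then u ⟨i, h⟩ else !(v ⟨i, h⟩)) else decide (i + 1 < n)

def gB {n : ℕ} (d : ℕ) (L : Finset (Fin n × Bool)) (S : Finset ℕ)
    (u v : {i // i ∈ S} → Bool) (m : ℕ) : Bool :=
  if h : d ≤ m ∧ m - d ∈ S then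
    (if inL L m true then u ⟨m - d, h.2⟩ else !(v ⟨m - d, h.2⟩)) else false

def Fall {n : ℕ} (d : ℕ) (L : Finset (Fin n × Bool)) (S : Finset ℕ)
    (u : {i // i ∈ S} → Bool) : Fin n × Bool → Bool :=
  fun x => if x.2 then gB d L S u u (x.1 : ℕ) else gA L S u u (x.1 : ℕ)

def gg {n : ℕ} (d : ℕ) (L : Finset (Fin n × Bool)) (S : Finset ℕ)
    (u : {i // i ∈ S} → Bool) : ({x // x ∈ L} → Bool) × ({x // x ∈ Lᶜ} → Bool) :=
  (fun x => Fall d L S u x.1, fun x => Fall d L S u x.1)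

def Nval (S : Finset ℕ) (u : {i // i ∈ S} → Bool) : ℕ :=
  ∑ i ∈ S.attach, if u i then 2 ^ (i : ℕ) else 0

/-- the hypotheses on the split-pair set -/
def Good {n : ℕ} (d : ℕ) (L : Finset (Fin n × Bool)) (S : Finset ℕ) : Prop :=
  ∀ i ∈ S, i + 1 < n ∧ i + d < n ∧ (inL L i false ↔ ¬ inL L (i + d) true)

section main
variable {n : ℕ} {d : ℕ} {L : Finset (Fin n × Bool)} {S : Finset ℕ}

lemma combine_eq (u v : {i // i ∈ S} → Bool) (x : Fin n × Bool) :
    combine L (gg d L S u).1 (gg d L S v).2 x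
      = if x.2 then gB d L S u v (x.1 : ℕ) else gA L S u v (x.1 : ℕ) := by
  obtain ⟨i, c⟩ := x
  have hiL : ∀ c', inL L (i : ℕ) c' ↔ (i, c') ∈ L := by
    intro c'
    constructor
    · rintro ⟨h, hm⟩; simpa using hm
    · intro hm; exact ⟨i.isLt, by simpa using hm⟩
  have hcomb : combine L (gg d L S u).1 (gg d L S v).2 (i, c)
      = if (i, c) ∈ L then Fall d L S u (i, c) else Fall d L S v (i, c) := by
    unfold combine gg
    split
    · rfl
    · rfl
  rw [hcomb]
  cases c with
  | false =>
    show (if (i, false) ∈ L then gA L S u u ↑i else gA L S v v ↑i) = gA L S u v ↑i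
    by_cases hiS : (i : ℕ) ∈ S
    · by_cases hL : (i, false) ∈ L
      · rw [if_pos hL]; simp only [gA, dif_pos hiS, if_pos ((hiL false).mpr hL)]
      · rw [if_neg hL]; simp only [gA, dif_pos hiS, if_neg (fun h => hL ((hiL false).mp h))]
    · simp only [gA, dif_neg hiS]; split <;> rfl
  | true =>
    show (if (i, true) ∈ L then gB d L S u u ↑i else gB d L S v v ↑i) = gB d L S u v ↑i
    by_cases hiS : d ≤ (i : ℕ) ∧ (i : ℕ) - d ∈ S
    · by_cases hL : (i, true) ∈ L
      · rw [if_pos hL]; simp only [gB, dif_pos hiS, if_pos ((hiL true).mpr hL)]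
      · rw [if_neg hL]; simp only [gB, dif_pos hiS, if_neg (fun h => hL ((hiL true).mp h))]
    · simp only [gB, dif_neg hiS]; split <;> rfl

lemma key (hd : d ≤ n) (hS : Good d L S) (u v : {i // i ∈ S} → Bool) :
    bitValN (gA L S u v) n + bitValN (gB d L S u v) n / 2 ^ d + Nval S v
      = (2 ^ (n - 1) - 1) + Nval S u := by
  have hSr1 : S ⊆ Finset.range (n - 1) := fun i hi =>
    Finset.mem_range.mpr (by have := (hS i hi).1; omega)
  have hSrn : S ⊆ Finset.range n := fun i hi =>
    Finset.mem_range.mpr (by have := (hS i hi).1; omega)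
  have hSrd : S ⊆ Finset.range (n - d) := fun i hi =>
    Finset.mem_range.mpr (by have := (hS i hi).2.1; omega)
  have e1 : bitValN (gA L S u v) n
      = (∑ i ∈ Finset.range (n - 1) \ S, 2 ^ i)
        + ∑ i ∈ S.attach, (if inL L i.1 false then (if u i then 2 ^ i.1 else 0)
            else (if v i then 0 else 2 ^ i.1)) := by
    rw [bitValN, ← Finset.sum_sdiff hSrn]
    congr 1
    · calc ∑ i ∈ Finset.range n \ S, (if gA L S u v i then 2 ^ i else 0)
          = ∑ i ∈ Finset.range (n - 1) \ S, (if gA L S u v i then 2 ^ i else 0) := by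
            refine (Finset.sum_subset ?_ ?_).symm
            · intro x hx
              simp only [Finset.mem_sdiff, Finset.mem_range] at hx ⊢
              exact ⟨by omega, hx.2⟩
            · intro x hx hx'
              simp only [Finset.mem_sdiff, Finset.mem_range] at hx hx'
              have hxS : x ∉ S := hx.2
              have hx1 : ¬ (x < n - 1) := fun h => hx' ⟨h, hxS⟩
              have hxn : ¬ (x + 1 < n) := by omega
              simp [gA, hxS, hxn]
        _ = ∑ i ∈ Finset.range (n - 1) \ S, 2 ^ i := by
            apply Finset.sum_congr rfl
            intro x hx
            simp only [Finset.mem_sdiff, Finset.mem_range] at hx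
            have hxn : x + 1 < n := by omega
            simp [gA, hx.2, hxn]
    · rw [← Finset.sum_attach S (fun i => if gA L S u v i then 2 ^ i else 0)]
      apply Finset.sum_congr rfl
      intro i _
      simp only [gA, dif_pos i.2]
      by_cases hL : inL L i.1 false
      · simp [hL]
      · simp only [if_neg hL]
        cases v i <;> simp
  have e2 : bitValN (gB d L S u v) n / 2 ^ d
      = ∑ i ∈ S.attach, (if inL L (i.1 + d) true then (if u i then 2 ^ i.1 else 0)
          else (if v i then 0 else 2 ^ i.1)) := by
    rw [bitValN_div _ _ _ hd, bitValN]
    rw [← Finset.sum_subset hSrd (fun x _ hxS => by simp [gB, Nat.add_sub_cancel, hxS])]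
    rw [← Finset.sum_attach S (fun i => if gB d L S u v (i + d) then 2 ^ i else 0)]
    apply Finset.sum_congr rfl
    intro i _
    have hcond : d ≤ i.1 + d ∧ i.1 + d - d ∈ S := ⟨Nat.le_add_left d i.1, by simpa using i.2⟩
    simp only [gB, dif_pos hcond]
    have hsub : (⟨i.1 + d - d, hcond.2⟩ : {x // x ∈ S}) = i := Subtype.ext (by simp)
    rw [hsub]
    by_cases hL : inL L (i.1 + d) true
    · simp [hL]
    · simp only [if_neg hL]
      cases v i <;> simp
  rw [e1, e2]
  have e3 : ∀ i ∈ S.attach,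
      ((if inL L i.1 false then (if u i then 2 ^ i.1 else 0) else (if v i then 0 else 2 ^ i.1))
        + (if inL L (i.1 + d) true then (if u i then 2 ^ i.1 else 0) else (if v i then 0 else 2 ^ i.1)))
      = (2 ^ i.1 - (if v i then 2 ^ i.1 else 0)) + (if u i then 2 ^ i.1 else 0) := by
    intro i _
    have hiff := (hS i.1 i.2).2.2
    by_cases hL : inL L i.1 false
    · have hnot : ¬ inL L (i.1 + d) true := hiff.mp hL
      rw [if_pos hL, if_neg hnot]
      cases u i <;> cases v i <;> simp <;> omega
    · have hyes : inL L (i.1 + d) true := by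
        by_contra hc; exact hL (hiff.mpr hc)
      rw [if_neg hL, if_pos hyes]
      cases u i <;> cases v i <;> simp <;> omega
  have e6 : (∑ i ∈ S.attach, (if inL L i.1 false then (if u i then 2 ^ i.1 else 0)
            else (if v i then 0 else 2 ^ i.1)))
        + (∑ i ∈ S.attach, (if inL L (i.1 + d) true then (if u i then 2 ^ i.1 else 0)
            else (if v i then 0 else 2 ^ i.1)))
      = (∑ i ∈ S.attach, (2 ^ i.1 - (if v i then 2 ^ i.1 else 0)))
        + ∑ i ∈ S.attach, (if u i then 2 ^ i.1 else 0) := by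
    rw [← Finset.sum_add_distrib, Finset.sum_congr rfl e3, Finset.sum_add_distrib]
  have e4 : (∑ i ∈ S.attach, (2 ^ i.1 - (if v i then 2 ^ i.1 else 0))) + Nval S v
      = ∑ i ∈ S.attach, 2 ^ i.1 := by
    rw [Nval, ← Finset.sum_add_distrib]
    apply Finset.sum_congr rfl
    intro i _
    have : (if v i then 2 ^ i.1 else 0) ≤ 2 ^ i.1 := by split <;> simp
    omega
  have e5 : (∑ i ∈ Finset.range (n - 1) \ S, 2 ^ i) + ∑ i ∈ S.attach, 2 ^ i.1
      = 2 ^ (n - 1) - 1 := by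
    rw [Finset.sum_attach S (fun i => 2 ^ i), Finset.sum_sdiff hSr1, sum_range_two_pow]
  have hNu : Nval S u = ∑ i ∈ S.attach, (if u i then 2 ^ i.1 else 0) := rfl
  omega

lemma Nval_le (hS : Good d L S) (w : {i // i ∈ S} → Bool) : Nval S w ≤ 2 ^ (n - 1) - 1 := by
  have hSr1 : S ⊆ Finset.range (n - 1) := fun i hi =>
    Finset.mem_range.mpr (by have := (hS i hi).1; omega)
  have h1 : Nval S w ≤ ∑ i ∈ S.attach, 2 ^ i.1 :=
    Finset.sum_le_sum (fun i _ => by split <;> simp)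
  rw [Finset.sum_attach S (fun i => 2 ^ i)] at h1
  have h2 : (∑ i ∈ S, 2 ^ i) ≤ ∑ i ∈ Finset.range (n - 1), 2 ^ i :=
    Finset.sum_le_sum_of_subset hSr1
  rw [sum_range_two_pow] at h2
  omega

lemma highbit (hn : 1 ≤ n) (hd : d ≤ n) (hS : Good d L S) (u v : {i // i ∈ S} → Bool) :
    Nat.testBit (bitValN (gA L S u v) n + bitValN (gB d L S u v) n / 2 ^ d) (n - 1)
      = decide (Nval S v < Nval S u) := by
  have hkey := key hd hS u v
  have hNu := Nval_le hS u
  have hNv := Nval_le hS v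
  set T := bitValN (gA L S u v) n + bitValN (gB d L S u v) n / 2 ^ d with hT
  have h1 : (1:ℕ) ≤ 2 ^ (n - 1) := Nat.one_le_two_pow
  rw [Nat.testBit_eq_decide_div_mod_eq]
  by_cases hlt : Nval S v < Nval S u
  · have hdiv : T / 2 ^ (n - 1) = 1 := by
      apply Nat.div_eq_of_lt_le
      · omega
      · have : Nat.succ 1 * 2 ^ (n-1) = 2 ^ (n-1) + 2 ^ (n-1) := by ring
        omega
    rw [hdiv]
    simp [hlt]
  · have hdiv : T / 2 ^ (n - 1) = 0 := Nat.div_eq_of_lt (by omega)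
    rw [hdiv]
    simp [hlt]


lemma Nval_eq_bitValN (hS : Good d L S) (u : {i // i ∈ S} → Bool) :
    Nval S u = bitValN (fun i => if h : i ∈ S then u ⟨i, h⟩ else false) n := by
  have hSrn : S ⊆ Finset.range n := fun i hi =>
    Finset.mem_range.mpr (by have := (hS i hi).1; omega)
  rw [bitValN, ← Finset.sum_subset hSrn (fun x _ hxS => by simp [hxS])]
  rw [← Finset.sum_attach S (fun i => if (if h : i ∈ S then u ⟨i, h⟩ else false) then 2 ^ i else 0)]
  apply Finset.sum_congr rfl
  intro i _
  rw [dif_pos i.2]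

lemma Nval_inj (hS : Good d L S) (u v : {i // i ∈ S} → Bool) (huv : u ≠ v) :
    Nval S u ≠ Nval S v := by
  intro h
  apply huv
  funext i
  have hin : i.1 < n := by have := (hS i.1 i.2).1; omega
  have h1 := testBit_bitValN (fun j => if h : j ∈ S then u ⟨j, h⟩ else false) n i.1 hin
  have h2 := testBit_bitValN (fun j => if h : j ∈ S then v ⟨j, h⟩ else false) n i.1 hin
  rw [← Nval_eq_bitValN hS] at h1 h2
  rw [h] at h1
  rw [h1] at h2
  simpa [dif_pos i.2] using h2

lemma gg_inj (hS : Good d L S) : Function.Injective (gg d L S) := by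
  intro u v h
  funext i
  have hi := hS i.1 i.2
  by_cases hL : inL L i.1 false
  · obtain ⟨hlt, hmem⟩ := hL
    have hcf := congrFun (congrArg Prod.fst h) ⟨(⟨i.1, hlt⟩, false), hmem⟩
    have hg : ∀ w : {x // x ∈ S} → Bool, Fall d L S w (⟨i.1, hlt⟩, false) = w i := by
      intro w
      show gA L S w w ((⟨i.1, hlt⟩ : Fin n) : ℕ) = w i
      have : inL L i.1 false := ⟨hlt, hmem⟩
      simp [gA, i.2, this]
    simpa [gg, hg] using hcf
  · have hyes : inL L (i.1 + d) true := by
      by_contra hc; exact hL (hi.2.2.mpr hc)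
    obtain ⟨hlt, hmem⟩ := hyes
    have hcf := congrFun (congrArg Prod.fst h) ⟨(⟨i.1 + d, hlt⟩, true), hmem⟩
    have hg : ∀ w : {x // x ∈ S} → Bool, Fall d L S w (⟨i.1 + d, hlt⟩, true) = w i := by
      intro w
      show gB d L S w w ((⟨i.1 + d, hlt⟩ : Fin n) : ℕ) = w i
      have hcond : d ≤ i.1 + d ∧ i.1 + d - d ∈ S := ⟨Nat.le_add_left d i.1, by simpa using i.2⟩
      have hyes' : inL L (i.1 + d) true := ⟨hlt, hmem⟩
      rw [gB]
      rw [dif_pos hcond, if_pos hyes']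
      congr 1
      exact Subtype.ext (by simp)
    simpa [gg, hg] using hcf

lemma construction (hn : 1 ≤ n) (hd : d ≤ n) (hS : Good d L S) :
    ∃ 𝒜 : Finset (({x // x ∈ L} → Bool) × ({x // x ∈ Lᶜ} → Bool)),
      𝒜.card = 2 ^ S.card ∧
      ∀ p ∈ 𝒜, ∀ q ∈ 𝒜, p ≠ q →
        sAddHigh (fun i => combine L p.1 q.2 (i, false))
            (fun i => combine L p.1 q.2 (i, true)) ⟨d, by omega⟩
        ≠ sAddHigh (fun i => combine L q.1 p.2 (i, false))
            (fun i => combine L q.1 p.2 (i, true)) ⟨d, by omega⟩ := by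
  classical
  refine ⟨Finset.image (gg d L S) Finset.univ, ?_, ?_⟩
  · rw [Finset.card_image_of_injective _ (gg_inj hS), Finset.card_univ]
    simp
  · intro p hp q hq hpq
    obtain ⟨u, _, hu⟩ := Finset.mem_image.mp hp
    obtain ⟨v, _, hv⟩ := Finset.mem_image.mp hq
    subst hu hv
    have huv : u ≠ v := fun hh => hpq (by rw [hh])
    have key1 : ∀ u' v' : {i // i ∈ S} → Bool,
        sAddHigh (fun i => combine L (gg d L S u').1 (gg d L S v').2 (i, false))
            (fun i => combine L (gg d L S u').1 (gg d L S v').2 (i, true))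
            (⟨d, by omega⟩ : Fin (n + 1))
          = decide (Nval S v' < Nval S u') := by
      intro u' v'
      have hA : (fun i : Fin n => combine L (gg d L S u').1 (gg d L S v').2 (i, false))
          = fun i : Fin n => gA L S u' v' (i : ℕ) :=
        funext fun i => (combine_eq u' v' (i, false)).trans rfl
      have hB : (fun i : Fin n => combine L (gg d L S u').1 (gg d L S v').2 (i, true))
          = fun i : Fin n => gB d L S u' v' (i : ℕ) :=
        funext fun i => (combine_eq u' v' (i, true)).trans rfl
      rw [hA, hB]
      have hbA : bitVal (fun i : Fin n => gA L S u' v' (i : ℕ)) = bitValN (gA L S u' v') n :=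
        Fin.sum_univ_eq_sum_range (fun j => if gA L S u' v' j then 2 ^ j else 0) n
      have hbB : bitVal (fun i : Fin n => gB d L S u' v' (i : ℕ)) = bitValN (gB d L S u' v') n :=
        Fin.sum_univ_eq_sum_range (fun j => if gB d L S u' v' j then 2 ^ j else 0) n
      rw [sAddHigh, hbA, hbB]
      exact highbit hn hd hS u' v'
    rw [key1 u v, key1 v u]
    have hNe : Nval S u ≠ Nval S v := Nval_inj hS u v huv
    simp only [ne_eq, decide_eq_decide]
    omega

end main
lemma arith_contra (o k n : ℕ) (h1 : 1 ≤ k) (h5 : 5 ≤ n) (h8 : 8 * k ≤ n + 3)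
    (hOn : n ≤ 2 * o + k) (hc : o * o ≤ (n - 1) * (k - 1)) : False := by
  have hkn : k ≤ n := by omega
  have hc' : (o : ℤ) * o ≤ ((n : ℤ) - 1) * ((k : ℤ) - 1) := by
    have e1 : ((n - 1 : ℕ) : ℤ) = (n : ℤ) - 1 := by omega
    have e2 : ((k - 1 : ℕ) : ℤ) = (k : ℤ) - 1 := by omega
    calc (o : ℤ) * o = ((o * o : ℕ) : ℤ) := by push_cast; ring
      _ ≤ (((n - 1) * (k - 1) : ℕ) : ℤ) := by exact_mod_cast hc
      _ = ((n : ℤ) - 1) * ((k : ℤ) - 1) := by rw [Nat.cast_mul, e1, e2]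
  have hk1 : (1 : ℤ) ≤ (k:ℤ) := by exact_mod_cast h1
  have hn5 : (5 : ℤ) ≤ (n:ℤ) := by exact_mod_cast h5
  have h8' : 8 * (k:ℤ) ≤ (n:ℤ) + 3 := by exact_mod_cast h8
  have hOn' : (n:ℤ) ≤ 2 * (o:ℤ) + (k:ℤ) := by exact_mod_cast hOn
  have hA : (0:ℤ) ≤ ((k:ℤ) - 1) * (17 * (k:ℤ) - 9) := by nlinarith
  have hB : (0:ℤ) ≤ ((n:ℤ) + 3 - 8 * (k:ℤ)) * (((n:ℤ) + 3 - 8 * (k:ℤ)) + 10 * (k:ℤ) - 6) := by nlinarith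
  have hD : ((n:ℤ) - (k:ℤ)) ^ 2 = 4 * ((n:ℤ) - 1) * (k:ℤ) +
      (((k:ℤ) - 1) * (17 * (k:ℤ) - 9) + ((n:ℤ) + 3 - 8 * (k:ℤ)) * (((n:ℤ) + 3 - 8 * (k:ℤ)) + 10 * (k:ℤ) - 6)) := by
    ring
  have hC : ((n:ℤ) - (k:ℤ)) ^ 2 ≤ (2 * (o:ℤ)) ^ 2 := by
    have h0 : (0:ℤ) ≤ (n:ℤ) - (k:ℤ) := by omega
    have h1 : (n:ℤ) - (k:ℤ) ≤ 2 * (o:ℤ) := by omega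
    nlinarith
  have hE : (2 * (o:ℤ)) ^ 2 ≤ 4 * ((n:ℤ) - 1) * ((k:ℤ) - 1) := by nlinarith
  nlinarith

lemma part1 (n : ℕ) (hn : 4 ≤ n) (L : Finset (Fin n × Bool)) (hL : L.card = n) :
    ∃ d ≤ n, ∃ S : Finset ℕ, ((n + 3) / 4) / 2 ≤ S.card ∧ Good d L S := by
  classical
  set k := ((n + 3) / 4) / 2 with hk
  set Sd : ℕ → Finset ℕ := fun dd => (Finset.range (n - 1)).filter
    (fun i => i + dd < n ∧ (inL L i false ↔ ¬ inL L (i + dd) true)) with hSd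
  have hGood : ∀ dd, Good dd L (Sd dd) := by
    intro dd i hi
    rw [hSd] at hi
    simp only [Finset.mem_filter, Finset.mem_range] at hi
    exact ⟨by omega, hi.2.1, hi.2.2⟩
  by_cases hcase : k ≤ (Sd 0).card
  · exact ⟨0, by omega, Sd 0, hcase, hGood 0⟩
  -- case 2
  push_neg at hcase
  have hk1 : 1 ≤ k := by omega
  have h8k : 8 * k ≤ n + 3 := by
    rw [hk, Nat.div_div_eq_div_mul]
    have := Nat.div_mul_le_self (n + 3) 8
    omega
  have hn5 : 5 ≤ n := by omega
  -- counting
  set X := (Finset.range n).filter (fun i => inL L i false) with hX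
  set Y := (Finset.range n).filter (fun i => inL L i true) with hY
  have himg : ∀ c : Bool, ((Finset.range n).filter (fun i => inL L i c))
      = (L.filter (fun x => x.2 = c)).image (fun x => (x.1 : ℕ)) := by
    intro c; ext i
    simp only [Finset.mem_filter, Finset.mem_range, Finset.mem_image]
    constructor
    · rintro ⟨hi, hlt, hmem⟩
      exact ⟨(⟨i, hlt⟩, c), ⟨hmem, rfl⟩, rfl⟩
    · rintro ⟨x, ⟨hxL, hxc⟩, rfl⟩
      refine ⟨x.1.isLt, x.1.isLt, ?_⟩
      obtain ⟨x1, x2⟩ := x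
      cases hxc
      simpa using hxL
  have hinj : ∀ c : Bool, Set.InjOn (fun x : Fin n × Bool => (x.1 : ℕ))
      (L.filter (fun x => x.2 = c)) := by
    intro c x hx y hy hxy
    simp only [Finset.coe_filter, Set.mem_setOf_eq] at hx hy
    exact Prod.ext (Fin.val_injective hxy) (hx.2.trans hy.2.symm)
  have hXY : X.card + Y.card = n := by
    rw [hX, hY, himg false, himg true,
      Finset.card_image_of_injOn (hinj false), Finset.card_image_of_injOn (hinj true)]
    have hsplit := Finset.card_filter_add_card_filter_not
      (s := L) (p := fun x : Fin n × Bool => x.2 = false)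
    have hneg : L.filter (fun x : Fin n × Bool => ¬(x.2 = false))
        = L.filter (fun x : Fin n × Bool => x.2 = true) := by
      apply Finset.filter_congr; intros x _; simp
    rw [hneg] at hsplit
    omega
  set O := (Finset.range n).filter (fun i => inL L i false ∧ inL L i true) with hO
  set Z := (Finset.range n).filter (fun i => ¬ inL L i false ∧ ¬ inL L i true) with hZ
  have h1 : (X ∪ Y).card + (X ∩ Y).card = X.card + Y.card := Finset.card_union_add_card_inter X Y
  have h2 : X ∩ Y = O := by
    ext i
    simp only [Finset.mem_inter, hX, hY, hO, Finset.mem_filter, Finset.mem_range]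
    tauto
  have hMsub : (X ∪ Y) \ O ⊆ insert (n - 1) (Sd 0) := by
    intro i hi
    simp only [Finset.mem_sdiff, Finset.mem_union, hX, hY, hO, Finset.mem_filter,
      Finset.mem_range] at hi
    simp only [Finset.mem_insert, hSd, Finset.mem_filter, Finset.mem_range, Nat.add_zero]
    by_cases hi1 : i = n - 1
    · exact Or.inl hi1
    · have hiln : i < n := by rcases hi.1 with h | h <;> exact h.1
      refine Or.inr ⟨by omega, by omega, ?_⟩
      have := hi.2
      tauto
  have hOsub : O ⊆ X ∪ Y := by
    intro i hi
    simp only [hO, Finset.mem_filter, Finset.mem_range] at hi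
    simp only [Finset.mem_union, hX, hY, Finset.mem_filter, Finset.mem_range]
    tauto
  have hMcard : (X ∪ Y).card ≤ O.card + k := by
    have e := Finset.card_sdiff_add_card_eq_card hOsub
    have e2 : ((X ∪ Y) \ O).card ≤ (insert (n - 1) (Sd 0)).card := Finset.card_le_card hMsub
    have e3 := Finset.card_insert_le (n - 1) (Sd 0)
    omega
  have hunion : (X ∪ Y) ∪ Z = Finset.range n := by
    ext i
    simp only [Finset.mem_union, hX, hY, hZ, Finset.mem_filter, Finset.mem_range]
    constructor
    · rintro ((h | h) | h) <;> [exact h.1; exact h.1; exact h.1]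
    · intro h
      by_cases hf : inL L i false <;> by_cases ht : inL L i true <;> tauto
  have hdisj : Disjoint (X ∪ Y) Z := by
    rw [Finset.disjoint_left]
    intro i hi hiZ
    simp only [Finset.mem_union, hX, hY, hZ, Finset.mem_filter, Finset.mem_range] at hi hiZ
    tauto
  have hcardunion : (X ∪ Y).card + Z.card = n := by
    rw [← Finset.card_union_of_disjoint hdisj, hunion, Finset.card_range]
  have hOZ : Z.card = O.card := by
    have : n = (X ∪ Y).card + O.card := by rw [← h2]; omega
    omega
  have hOn : n ≤ 2 * O.card + k := by
    have : n = (X ∪ Y).card + O.card := by rw [← h2]; omega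
    omega
  -- pigeonhole over the shift amounts
  have hOmem : ∀ i ∈ O, i < n ∧ inL L i false ∧ inL L i true := by
    intro i hi; simpa [hO, Finset.mem_filter, Finset.mem_range] using hi
  have hZmem : ∀ i ∈ Z, i < n ∧ ¬ inL L i false ∧ ¬ inL L i true := by
    intro i hi; simpa [hZ, Finset.mem_filter, Finset.mem_range] using hi
  have hOZne : ∀ i ∈ O, ∀ j ∈ Z, i ≠ j := by
    intro i hi j hj he
    subst he
    have h1 := hOmem i hi
    have h2 := hZmem i hj
    tauto
  have hex : ∃ dd ∈ Finset.Icc 1 (n - 1), k ≤ (Sd dd).card := by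
    by_contra hno
    push_neg at hno
    have hfib : (O ×ˢ Z).card = ∑ dd ∈ Finset.Icc 1 (n - 1),
        ((O ×ˢ Z).filter (fun p => (p.1 - p.2) + (p.2 - p.1) = dd)).card := by
      apply Finset.card_eq_sum_card_fiberwise
      intro p hp
      rw [Finset.mem_coe, Finset.mem_product] at hp
      have ho := hOmem p.1 hp.1
      have hz := hZmem p.2 hp.2
      have hne := hOZne p.1 hp.1 p.2 hp.2
      rw [Finset.mem_coe, Finset.mem_Icc]; beta_reduce; have := ho.1; have := hz.1
      omega
    have hfible : ∀ dd ∈ Finset.Icc 1 (n - 1),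
        ((O ×ˢ Z).filter (fun p => (p.1 - p.2) + (p.2 - p.1) = dd)).card ≤ (Sd dd).card := by
      intro dd hdd
      rw [Finset.mem_Icc] at hdd
      apply Finset.card_le_card_of_injOn (fun p => p.1 - (p.1 - p.2))
      · intro p hp
        rw [Finset.mem_coe, Finset.mem_filter, Finset.mem_product] at hp
        obtain ⟨⟨hp1, hp2⟩, hpd⟩ := hp
        have ho := hOmem p.1 hp1
        have hz := hZmem p.2 hp2
        have hne := hOZne p.1 hp1 p.2 hp2
        simp only [Finset.mem_coe, hSd, Finset.mem_filter, Finset.mem_range]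
        rcases Nat.lt_or_ge p.1 p.2 with h | h
        · have hmn : p.1 - (p.1 - p.2) = p.1 := by omega
          have hadd : p.1 + dd = p.2 := by omega
          rw [hmn]
          refine ⟨by omega, by omega, ?_⟩
          rw [hadd]
          tauto
        · have h' : p.2 < p.1 := by omega
          have hmn : p.1 - (p.1 - p.2) = p.2 := by omega
          have hadd : p.2 + dd = p.1 := by omega
          rw [hmn]
          refine ⟨by omega, by omega, ?_⟩
          rw [hadd]
          tauto
      · intro p hp q hq heq
        simp only [Finset.mem_coe, Finset.mem_filter, Finset.mem_product] at hp hq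
        obtain ⟨⟨hp1, hp2⟩, hpd⟩ := hp
        obtain ⟨⟨hq1, hq2⟩, hqd⟩ := hq
        have hnep := hOZne p.1 hp1 p.2 hp2
        have hneq := hOZne q.1 hq1 q.2 hq2
        have hpq1 : p.1 ≠ q.2 := hOZne p.1 hp1 q.2 hq2
        have hqp1 : q.1 ≠ p.2 := hOZne q.1 hq1 p.2 hp2
        simp only at heq
        have : p.1 = q.1 ∧ p.2 = q.2 := by omega
        exact Prod.ext this.1 this.2
    have hsum : ∑ dd ∈ Finset.Icc 1 (n - 1), (Sd dd).card ≤ (n - 1) * (k - 1) := by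
      have h := Finset.sum_le_card_nsmul (Finset.Icc 1 (n - 1)) (fun dd => (Sd dd).card) (k - 1)
        (fun dd hdd => by
          show (Sd dd).card ≤ k - 1
          have := hno dd hdd; omega)
      rw [Nat.card_Icc, smul_eq_mul] at h
      have he : n - 1 + 1 - 1 = n - 1 := by omega
      rwa [he] at h
    have hcard2 : O.card * O.card ≤ (n - 1) * (k - 1) := by
      calc O.card * O.card = (O ×ˢ Z).card := by rw [Finset.card_product, hOZ]
        _ = _ := hfib
        _ ≤ ∑ dd ∈ Finset.Icc 1 (n - 1), (Sd dd).card := Finset.sum_le_sum hfible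
        _ ≤ (n - 1) * (k - 1) := hsum
    exact arith_contra O.card k n hk1 hn5 h8k hOn hcard2
  obtain ⟨dd, hdd, hge⟩ := hex
  rw [Finset.mem_Icc] at hdd
  exact ⟨dd, by omega, Sd dd, hge, hGood dd⟩

theorem stmt_12 (n : ℕ) (hn : 4 ≤ n) (L : Finset (Fin n × Bool)) (hL : L.card = n) :
    ∃ D : Fin (n + 1),
      ∃ 𝒜 : Finset (({x // x ∈ L} → Bool) × ({x // x ∈ Lᶜ} → Bool)),
        𝒜.card ≥ 2 ^ (((n + 3) / 4) / 2) ∧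
        ∀ p ∈ 𝒜, ∀ q ∈ 𝒜, p ≠ q →
          sAddHigh (fun i => combine L p.1 q.2 (i, false))
              (fun i => combine L p.1 q.2 (i, true)) D
          ≠ sAddHigh (fun i => combine L q.1 p.2 (i, false))
              (fun i => combine L q.1 p.2 (i, true)) D := by
  obtain ⟨d, hd, S, hScard, hGood⟩ := part1 n hn L hL
  obtain ⟨𝒜, hcard, hfool⟩ := construction (n := n) (d := d) (L := L) (S := S)
    (by omega) hd hGood
  refine ⟨⟨d, by omega⟩, 𝒜, ?_, ?_⟩
  · rw [ge_iff_le, hcard]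
    exact Nat.pow_le_pow_right (by norm_num) hScard
  · exact hfool
end

section
/- Let n ≥ 4 and let sAdd^n_{n−1}(A, B, D) be bit n−1 of val(A) + val(B)/2^D as above. Then every ordered binary decision diagram computing sAdd^n_{n−1} (over the 2n operand variables, for any fixed ordering of these variables, with D-bits placed anywhere) has at least 2^{n/8} nodes. Abstractly: for any bijective enumeration π of the 2n operand variables, letting L be the first n variables under π, any function h from assignments of L to a finite set of size N such that h(l) = h(l') implies equal function values for all completions must have N ≥ 2^{n/8}. -/
lemma pow_sum_range (m : ℕ) : ∑ j ∈ Finset.range m, 2 ^ j = 2 ^ m - 1 := by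
  induction m with
  | zero => simp
  | succ m ih => rw [Finset.sum_range_succ, ih]; have := Nat.one_le_two_pow (n := m); omega

lemma sum_bits_lt (t : ℕ → ℕ) (m : ℕ) (h : ∀ i < m, t i ≤ 1) :
    ∑ i ∈ Finset.range m, t i * 2 ^ i < 2 ^ m := by
  have h1 : ∑ i ∈ Finset.range m, t i * 2 ^ i ≤ ∑ i ∈ Finset.range m, 2 ^ i := by
    apply Finset.sum_le_sum
    intro i hi
    have := h i (Finset.mem_range.mp hi)
    nlinarith [pow_pos (show 0 < 2 by norm_num) i]
  have := pow_sum_range m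
  have := Nat.one_le_two_pow (n := m)
  omega

lemma bitHigh1 (t : ℕ → ℕ) (n : ℕ) (hn : 1 ≤ n) (h1 : ∀ i < n, t i ≤ 1)
    (htop : t (n - 1) = 1) :
    Nat.testBit (∑ i ∈ Finset.range n, t i * 2 ^ i) (n - 1) = true := by
  obtain ⟨m, rfl⟩ : ∃ m, n = m + 1 := ⟨n - 1, by omega⟩
  simp only [Nat.add_sub_cancel] at htop ⊢
  rw [Finset.sum_range_succ, htop, one_mul]
  have hlow : ∑ i ∈ Finset.range m, t i * 2 ^ i < 2 ^ m :=
    sum_bits_lt t m (fun i hi => h1 i (by omega))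
  set S := ∑ i ∈ Finset.range m, t i * 2 ^ i with hS
  rw [Nat.testBit_eq_decide_div_mod_eq]
  have : (S + 2 ^ m) / 2 ^ m = 1 := by
    rw [Nat.add_div_right _ (pow_pos (by norm_num) m), Nat.div_eq_of_lt hlow]
  rw [this]
  decide

lemma bitHigh0 (t : ℕ → ℕ) (n p : ℕ) (hp : p < n) (hlow : ∀ i < p, t i ≤ 1)
    (hmid : t p = 2) (hhigh : ∀ i, p < i → i < n → t i = 1) :
    Nat.testBit (∑ i ∈ Finset.range n, t i * 2 ^ i) (n - 1) = false := by
  have key : ∑ i ∈ Finset.range n, t i * 2 ^ i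
      = (∑ i ∈ Finset.range p, t i * 2 ^ i) + 2 ^ n := by
    have hsplit : ∑ i ∈ Finset.Ico 0 (p+1), t i * 2 ^ i + ∑ i ∈ Finset.Ico (p+1) n, t i * 2 ^ i
        = ∑ i ∈ Finset.Ico 0 n, t i * 2 ^ i :=
      Finset.sum_Ico_consecutive _ (by omega) (by omega)
    rw [← Finset.range_eq_Ico, ← Finset.range_eq_Ico] at hsplit
    have h2 : ∑ i ∈ Finset.Ico (p+1) n, t i * 2 ^ i = ∑ i ∈ Finset.Ico (p+1) n, 2 ^ i := by
      apply Finset.sum_congr rfl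
      intro i hi
      rw [Finset.mem_Ico] at hi
      rw [hhigh i (by omega) hi.2, one_mul]
    have h3 : ∑ i ∈ Finset.range (p+1), 2 ^ i + ∑ i ∈ Finset.Ico (p+1) n, 2 ^ i
        = ∑ i ∈ Finset.range n, 2 ^ i := by
      rw [Finset.range_eq_Ico, Finset.range_eq_Ico]
      exact Finset.sum_Ico_consecutive _ (by omega) (by omega)
    rw [pow_sum_range, pow_sum_range] at h3
    rw [Finset.sum_range_succ, hmid] at hsplit
    have hpn : 2 ^ (p+1) ≤ 2 ^ n := Nat.pow_le_pow_right (by norm_num) (by omega)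
    have := Nat.one_le_two_pow (n := p+1)
    rw [pow_succ] at hpn this h3
    rw [h2] at hsplit
    omega
  rw [key, Nat.testBit_eq_decide_div_mod_eq]
  have hl : ∑ i ∈ Finset.range p, t i * 2 ^ i < 2 ^ (n-1) :=
    lt_of_lt_of_le (sum_bits_lt t p hlow) (Nat.pow_le_pow_right (by norm_num) (by omega))
  have hn2 : 2 ^ n = 2 ^ (n-1) * 2 := by
    rw [← pow_succ]; congr 1; omega
  have : (∑ i ∈ Finset.range p, t i * 2 ^ i + 2 ^ n) / 2 ^ (n-1) = 2 := by
    rw [hn2, Nat.add_mul_div_left _ _ (pow_pos (by norm_num) (n-1)),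
      Nat.div_eq_of_lt hl]
  rw [this]
  decide

lemma div_pow_bits (f : ℕ → Bool) (n d : ℕ) :
    (∑ j ∈ Finset.range n, (f j).toNat * 2 ^ j) / 2 ^ d
      = ∑ i ∈ Finset.range n, (if i + d < n then (f (i + d)).toNat else 0) * 2 ^ i := by
  rcases le_or_gt n d with hnd | hdn
  · rw [Nat.div_eq_of_lt]
    · symm
      apply Finset.sum_eq_zero
      intro i hi
      have : ¬ (i + d < n) := by omega
      simp [this]
    · calc ∑ j ∈ Finset.range n, (f j).toNat * 2 ^ j < 2 ^ n :=
            sum_bits_lt _ _ (fun i _ => Bool.toNat_le _)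
        _ ≤ 2 ^ d := Nat.pow_le_pow_right (by norm_num) hnd
  · have hsplit : ∑ j ∈ Finset.Ico 0 d, (f j).toNat * 2 ^ j
        + ∑ j ∈ Finset.Ico d n, (f j).toNat * 2 ^ j
        = ∑ j ∈ Finset.Ico 0 n, (f j).toNat * 2 ^ j :=
      Finset.sum_Ico_consecutive _ (by omega) (by omega)
    rw [← Finset.range_eq_Ico, ← Finset.range_eq_Ico] at hsplit
    have h2 : ∑ j ∈ Finset.Ico d n, (f j).toNat * 2 ^ j
        = 2 ^ d * ∑ i ∈ Finset.range (n - d), (f (d + i)).toNat * 2 ^ i := by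
      rw [Finset.sum_Ico_eq_sum_range, Finset.mul_sum]
      apply Finset.sum_congr rfl
      intro i _
      rw [pow_add]
      ring
    have hlow : ∑ j ∈ Finset.range d, (f j).toNat * 2 ^ j < 2 ^ d :=
      sum_bits_lt _ _ (fun i _ => Bool.toNat_le _)
    rw [← hsplit, h2,
      Nat.add_mul_div_left _ _ (pow_pos (by norm_num) d),
      Nat.div_eq_of_lt hlow, zero_add]
    rw [← Finset.sum_extend_by_zero (Finset.range (n-d))]
    rw [Finset.sum_subset (Finset.range_subset_range.mpr (show n - d ≤ n by omega))]
    · apply Finset.sum_congr rfl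
      intro i hi
      rw [Finset.mem_range] at hi
      by_cases hc : i < n - d
      · have h4 : i + d < n := by omega
        simp only [Finset.mem_range]
        rw [if_pos hc, if_pos h4, Nat.add_comm d i]
      · have h4 : ¬ (i + d < n) := by omega
        have h5 : ¬ (i < n - d) := by omega
        simp only [Finset.mem_range]
        rw [if_neg h5, if_neg h4, zero_mul]
    · intro i _ hi
      simp [hi]

def memB (n : ℕ) (L : Finset (Fin n × Bool)) (i : ℕ) (bb : Bool) : Bool :=
  if h : i < n then decide ((⟨i, h⟩, bb) ∈ L) else false

def wLo (I : Finset ℕ) (d : ℕ) (χ : ℕ → Bool) (i : ℕ) (bb : Bool) : Bool :=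
  if bb then (if d ≤ i ∧ i - d ∈ I then χ (i - d) else false)
  else (if i ∈ I then χ i else true)

def wHi (I : Finset ℕ) (d p : ℕ) (χ : ℕ → Bool) (i : ℕ) (bb : Bool) : Bool :=
  if bb then (if d ≤ i ∧ i - d ∈ I then
      (if i - d < p then false else if i - d = p then true else !χ (i - d)) else false)
  else (if i ∈ I then (if i < p then false else if i = p then true else !χ i)
        else decide (p ≤ i))

def vfun (n : ℕ) (L : Finset (Fin n × Bool)) (I : Finset ℕ) (d p : ℕ)
    (χL χR : ℕ → Bool) (i : ℕ) (bb : Bool) : Bool :=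
  if memB n L i bb then wLo I d χL i bb else wHi I d p χR i bb

def tfun (n : ℕ) (L : Finset (Fin n × Bool)) (I : Finset ℕ) (d p : ℕ)
    (χL χR : ℕ → Bool) (i : ℕ) : ℕ :=
  (vfun n L I d p χL χR i false).toNat +
    (if i + d < n then (vfun n L I d p χL χR (i + d) true).toNat else 0)

lemma tfun_mem (n : ℕ) (L : Finset (Fin n × Bool)) (I : Finset ℕ) (d p : ℕ)
    (χL χR : ℕ → Bool) (i : ℕ) (hiI : i ∈ I)
    (hin : i + d < n) (hsplit : memB n L i false = !(memB n L (i + d) true)) :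
    tfun n L I d p χL χR i =
      if i < p then (χL i).toNat else if i = p then 1 + (χL i).toNat
        else (χL i).toNat + (!χR i).toNat := by
  unfold tfun vfun wLo wHi
  have hd : d ≤ i + d := Nat.le_add_left d i
  have hsub : i + d - d = i := by omega
  cases hm : memB n L i false with
  | true =>
    have hmB : memB n L (i + d) true = false := by
      rw [hm] at hsplit; cases hmb : memB n L (i+d) true <;> simp [hmb] at hsplit ⊢
    rcases Nat.lt_trichotomy i p with hc | hc | hc
    · simp [hmB, hsub, hin, hiI, hd, hc, Nat.ne_of_lt hc]
    · subst hc; simp [hmB, hsub, hin, hiI, hd]; omega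
    · simp [hmB, hsub, hin, hiI, hd, hc, Nat.lt_asymm hc, (Nat.ne_of_lt hc).symm]
  | false =>
    have hmB : memB n L (i + d) true = true := by
      rw [hm] at hsplit; cases hmb : memB n L (i+d) true <;> simp [hmb] at hsplit ⊢
    rcases Nat.lt_trichotomy i p with hc | hc | hc
    · simp [hmB, hsub, hin, hiI, hd, hc, Nat.ne_of_lt hc]
    · subst hc; simp [hmB, hsub, hin, hiI, hd]
    · simp [hmB, hsub, hin, hiI, hd, hc, Nat.lt_asymm hc, (Nat.ne_of_lt hc).symm]
      omega

lemma tfun_not_mem (n : ℕ) (L : Finset (Fin n × Bool)) (I : Finset ℕ) (d p : ℕ)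
    (χL χR : ℕ → Bool) (i : ℕ) (hiI : i ∉ I)
    (hIb : ∀ j ∈ I, j + d < n) :
    tfun n L I d p χL χR i =
      if memB n L i false then 1 else (decide (p ≤ i)).toNat := by
  unfold tfun vfun wLo wHi
  have hsub : i + d - d = i := by omega
  have hnotand : ¬ (d ≤ i + d ∧ i + d - d ∈ I) := by
    rw [hsub]; exact fun hcon => hiI hcon.2
  rcases Nat.lt_or_ge (i + d) n with hc | hc
  · cases hm : memB n L i false <;> cases hmB : memB n L (i+d) true <;>
      simp [hsub, hc, hiI, hnotand, hmB]
  · cases hm : memB n L i false <;>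
      simp [hsub, hiI, (show ¬ (i+d<n) by omega), hnotand]

lemma combine_eq_s13 (n : ℕ) (L : Finset (Fin n × Bool)) (I : Finset ℕ) (d p : ℕ)
    (χL χR : ℕ → Bool) (i : Fin n) (bb : Bool) :
    combine L (fun x => wLo I d χL x.1.1.val x.1.2) (fun x => wHi I d p χR x.1.1.val x.1.2)
        (i, bb) = vfun n L I d p χL χR i.val bb := by
  unfold combine vfun memB
  by_cases hm : (i, bb) ∈ L
  · rw [dif_pos hm, dif_pos i.isLt]
    simp [Fin.eta, hm]
  · rw [dif_neg hm, dif_pos i.isLt]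
    simp [Fin.eta, hm]

lemma bitVal_eq (n : ℕ) (g : ℕ → Bool) :
    bitVal (fun i : Fin n => g i.val) = ∑ i ∈ Finset.range n, (g i).toNat * 2 ^ i := by
  unfold bitVal
  rw [Fin.sum_univ_eq_sum_range (fun k => if g k then 2 ^ k else 0) n]
  apply Finset.sum_congr rfl
  intro i _
  cases g i <;> simp

lemma core (n : ℕ) (L : Finset (Fin n × Bool)) (I : Finset ℕ) (d p : ℕ)
    (χL χR : ℕ → Bool) (hn : 1 ≤ n) (hd : d < n)
    (hI : ∀ i ∈ I, i + d < n ∧ memB n L i false = !(memB n L (i + d) true))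
    (hp : p ∈ I)
    (hagree : ∀ q ∈ I, p < q → χL q = χR q)
    (D : Fin (n + 1)) (hD : (D : ℕ) = d) :
    sAddHigh (fun i : Fin n => vfun n L I d p χL χR i.val false)
      (fun i : Fin n => vfun n L I d p χL χR i.val true) D = !(χL p) := by
  have hpn : p < n := by have := (hI p hp).1; omega
  unfold sAddHigh
  rw [hD]
  have hA := bitVal_eq n (fun k => vfun n L I d p χL χR k false)
  have hB := bitVal_eq n (fun k => vfun n L I d p χL χR k true)
  rw [hA, hB]
  show Nat.testBit (_ + _ / 2 ^ d) (n-1) = _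
  rw [div_pow_bits, ← Finset.sum_add_distrib]
  have hsum : ∀ i, (vfun n L I d p χL χR i false).toNat * 2 ^ i +
      (if i + d < n then (vfun n L I d p χL χR (i+d) true).toNat else 0) * 2 ^ i
      = tfun n L I d p χL χR i * 2 ^ i := by
    intro i; rw [tfun, add_mul]
  simp only [hsum]
  -- key facts
  have klow : ∀ i < p, tfun n L I d p χL χR i ≤ 1 := by
    intro i hip
    by_cases hiI : i ∈ I
    · rw [tfun_mem n L I d p χL χR i hiI (hI i hiI).1 (hI i hiI).2, if_pos hip]
      exact Bool.toNat_le _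
    · rw [tfun_not_mem n L I d p χL χR i hiI (fun j hj => (hI j hj).1)]
      cases memB n L i false <;> simp [Nat.not_le_of_lt hip]
  have kmid : tfun n L I d p χL χR p = 1 + (χL p).toNat := by
    rw [tfun_mem n L I d p χL χR p hp (hI p hp).1 (hI p hp).2]
    simp
  have khigh : ∀ i, p < i → i < n → tfun n L I d p χL χR i = 1 := by
    intro i hpi hin
    by_cases hiI : i ∈ I
    · rw [tfun_mem n L I d p χL χR i hiI (hI i hiI).1 (hI i hiI).2,
        if_neg (Nat.lt_asymm hpi), if_neg (Nat.ne_of_gt hpi), ← hagree i hiI hpi]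
      cases χL i <;> simp
    · rw [tfun_not_mem n L I d p χL χR i hiI (fun j hj => (hI j hj).1)]
      cases memB n L i false <;> simp [Nat.le_of_lt hpi]
  cases hχ : χL p with
  | true =>
    rw [Bool.not_true]
    exact bitHigh0 _ n p hpn klow (by rw [kmid, hχ]; rfl) khigh
  | false =>
    rw [Bool.not_false]
    apply bitHigh1 _ n hn
    · intro i hin
      rcases Nat.lt_trichotomy i p with hc | hc | hc
      · exact klow i hc
      · subst hc; rw [kmid, hχ]; simp
      · rw [khigh i hc hin]
    · rcases Nat.lt_or_ge p (n-1) with hc | hc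
      · exact khigh (n-1) hc (by omega)
      · have : p = n - 1 := by omega
        rw [← this, kmid, hχ]; rfl

def chif (I : Finset ℕ) (X : {x // x ∈ I} → Bool) (i : ℕ) : Bool :=
  if hi : i ∈ I then X ⟨i, hi⟩ else false


open Finset in
lemma counting (n : ℕ) (Fb Gb : ℕ → Bool) (hn : 8 ≤ n)
    (hcard : ((range n).filter (fun i => Fb i = true)).card
      + ((range n).filter (fun i => Gb i = true)).card = n) :
    ∃ d < n, n / 8 ≤ ((range n).filter
      (fun i => i + d < n ∧ ¬ (Fb i = Gb (i + d)))).card := by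
  have hk8 : 8 * (n / 8) ≤ n := by omega
  have hsum1 : ∑ i ∈ range n, ((if Fb i = true then 1 else 0)
      + (if Gb i = true then 1 else 0)) = n := by
    rw [Finset.sum_add_distrib, ← Finset.card_filter, ← Finset.card_filter]
    exact hcard
  have hsum2 : ∑ i ∈ range n, ((if Fb i = true then 1 else 0)
      + (if Gb i = true then 1 else 0)
      + 2 * (if Fb i = false ∧ Gb i = false then 1 else 0)
      + (if ¬ (Fb i = Gb i) then 1 else 0)) = 2 * n := by
    have hpt : ∀ i ∈ range n, ((if Fb i = true then 1 else 0)
      + (if Gb i = true then 1 else 0)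
      + 2 * (if Fb i = false ∧ Gb i = false then 1 else 0)
      + (if ¬ (Fb i = Gb i) then 1 else 0)) = 2 := by
      intro i _
      cases hf : Fb i <;> cases hg : Gb i <;> simp [hf, hg]
    rw [Finset.sum_congr rfl hpt, Finset.sum_const, Finset.card_range, smul_eq_mul,
      Nat.mul_comm]
  have hsum3 : ∑ i ∈ range n, (2 * (if Fb i = true ∧ Gb i = true then 1 else 0)
      + (if ¬ (Fb i = Gb i) then 1 else 0)) = n := by
    have hpt : ∀ i ∈ range n, (2 * (if Fb i = true ∧ Gb i = true then 1 else 0)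
        + (if ¬ (Fb i = Gb i) then 1 else 0))
        = ((if Fb i = true then 1 else 0) + (if Gb i = true then 1 else 0)) := by
      intro i _
      cases hf : Fb i <;> cases hg : Gb i <;> simp [hf, hg]
    rw [Finset.sum_congr rfl hpt]
    exact hsum1
  set c := ((range n).filter (fun i => ¬ (Fb i = Gb i))).card with hc
  set e1 := ((range n).filter (fun i => Fb i = true ∧ Gb i = true)).card with he1
  set e0 := ((range n).filter (fun i => Fb i = false ∧ Gb i = false)).card with he0
  have hcs : c = ∑ i ∈ range n, (if ¬ (Fb i = Gb i) then 1 else 0) :=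
    Finset.card_filter _ _
  have he1s : e1 = ∑ i ∈ range n, (if Fb i = true ∧ Gb i = true then 1 else 0) :=
    Finset.card_filter _ _
  have he0s : e0 = ∑ i ∈ range n, (if Fb i = false ∧ Gb i = false then 1 else 0) :=
    Finset.card_filter _ _
  rw [Finset.sum_add_distrib, ← Finset.mul_sum, ← hcs, ← he1s] at hsum3
  rw [Finset.sum_add_distrib, Finset.sum_add_distrib, ← Finset.mul_sum, hsum1,
    ← hcs, ← he0s] at hsum2
  -- hsum3 : 2 * e1 + c = n ;  hsum2 : n + 2 * e0 + c = 2 * n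
  rcases Nat.lt_or_ge c (n / 8) with hck | hck
  · -- c < n/8 : pigeonhole over shifts
    by_contra hcon
    push_neg at hcon
    simp only [ne_eq] at hcon
    set T := ((range n) ×ˢ (range n)).filter
      (fun q : ℕ × ℕ => q.2 + q.1 < n ∧ ¬ (Fb q.2 = Gb (q.2 + q.1))) with hT
    have hTcard : T.card = ∑ d ∈ range n,
        (T.filter (fun q => q.1 = d)).card := by
      apply Finset.card_eq_sum_card_fiberwise
      intro x hx
      rw [Finset.mem_coe, hT, Finset.mem_filter, Finset.mem_product] at hx
      exact hx.1.1
    have hfiber : ∀ d ∈ range n, (T.filter (fun q => q.1 = d)).card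
        = ((range n).filter (fun i => i + d < n ∧ ¬ (Fb i = Gb (i + d)))).card := by
      intro d hd
      have himg : T.filter (fun q => q.1 = d)
          = ((range n).filter (fun i => i + d < n ∧ ¬ (Fb i = Gb (i + d)))).map
              ⟨fun i => (d, i), fun a b hab => by
                rw [Prod.mk.injEq] at hab; exact hab.2⟩ := by
        ext q
        rw [Finset.mem_filter, Finset.mem_map, hT, Finset.mem_filter, Finset.mem_product]
        constructor
        · rintro ⟨⟨⟨hd1, hd2⟩, hd3, hd4⟩, hd5⟩
          subst hd5
          refine ⟨q.2, ?_, ?_⟩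
          · rw [Finset.mem_filter, Finset.mem_range]
            exact ⟨Finset.mem_range.mp hd2, hd3, hd4⟩
          · rfl
        · rintro ⟨i, hi, rfl⟩
          rw [Finset.mem_filter, Finset.mem_range] at hi
          refine ⟨⟨⟨hd, Finset.mem_range.mpr hi.1⟩, ?_, ?_⟩, rfl⟩
          · exact hi.2.1
          · exact hi.2.2
      rw [himg, Finset.card_map]
    have hTbound : T.card ≤ n * (n / 8 - 1) := by
      rw [hTcard]
      calc ∑ d ∈ range n, (T.filter (fun q => q.1 = d)).card
          ≤ ∑ _d ∈ range n, (n / 8 - 1) := by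
            apply Finset.sum_le_sum
            intro d hd
            rw [hfiber d hd]
            have := hcon d (Finset.mem_range.mp hd)
            omega
        _ = n * (n / 8 - 1) := by rw [Finset.sum_const, Finset.card_range, smul_eq_mul]
    have hinj : e0 * e1 ≤ T.card := by
      rw [he0, he1, ← Finset.card_product]
      apply Finset.card_le_card_of_injOn
        (fun q => if q.1 < q.2 then (q.2 - q.1, q.1) else (q.1 - q.2, q.2))
      · intro q hq
        rw [Finset.mem_coe, Finset.mem_product, Finset.mem_filter, Finset.mem_filter,
          Finset.mem_range, Finset.mem_range] at hq
        obtain ⟨⟨hi, hf0, hg0⟩, ⟨hj, hf1, hg1⟩⟩ := hq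
        have hne : q.1 ≠ q.2 := fun hE => by rw [hE, hf1] at hf0; exact Bool.noConfusion hf0
        rw [Finset.mem_coe, hT, Finset.mem_filter, Finset.mem_product]
        by_cases hlt : q.1 < q.2
        · simp only [if_pos hlt]
          have he : q.1 + (q.2 - q.1) = q.2 := by omega
          refine ⟨⟨Finset.mem_range.mpr (by omega), Finset.mem_range.mpr (by omega)⟩,
            by simpa [he] using (by omega : q.2 < n), ?_⟩
          show ¬ (Fb q.1 = Gb (q.1 + (q.2 - q.1)))
          rw [he, hf0, hg1]; simp
        · simp only [if_neg hlt]
          have hlt2 : q.2 < q.1 := by omega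
          have he : q.2 + (q.1 - q.2) = q.1 := by omega
          refine ⟨⟨Finset.mem_range.mpr (by omega), Finset.mem_range.mpr (by omega)⟩,
            by simpa [he] using (by omega : q.1 < n), ?_⟩
          show ¬ (Fb q.2 = Gb (q.2 + (q.1 - q.2)))
          rw [he, hf1, hg0]; simp
      · intro q hq q' hq' heq
        simp only [Finset.coe_product, Set.mem_prod, Finset.mem_coe, Finset.mem_filter,
          Finset.mem_range] at hq hq'
        obtain ⟨⟨hi, hf0, hg0⟩, ⟨hj, hf1, hg1⟩⟩ := hq
        obtain ⟨⟨hi', hf0', hg0'⟩, ⟨hj', hf1', hg1'⟩⟩ := hq'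
        simp only at heq
        by_cases hlt : q.1 < q.2 <;> by_cases hlt' : q'.1 < q'.2
        · rw [if_pos hlt, if_pos hlt', Prod.mk.injEq] at heq
          obtain ⟨h1, h2⟩ := heq
          exact Prod.ext h2 (by omega)
        · rw [if_pos hlt, if_neg hlt', Prod.mk.injEq] at heq
          obtain ⟨h1, h2⟩ := heq
          rw [h2, hf1'] at hf0
          exact Bool.noConfusion hf0
        · rw [if_neg hlt, if_pos hlt', Prod.mk.injEq] at heq
          obtain ⟨h1, h2⟩ := heq
          rw [h2, hf0'] at hf1
          exact Bool.noConfusion hf1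
        · rw [if_neg hlt, if_neg hlt', Prod.mk.injEq] at heq
          obtain ⟨h1, h2⟩ := heq
          exact Prod.ext (by omega) h2
    have hfin : e0 * e1 ≤ n * (n / 8 - 1) := le_trans hinj hTbound
    have hkpos : 1 ≤ n / 8 := by omega
    obtain ⟨k', hk'⟩ : ∃ k', n / 8 = k' + 1 := ⟨n / 8 - 1, by omega⟩
    have he01 : e0 = e1 := by omega
    rw [he01, hk'] at hfin
    simp only [Nat.add_sub_cancel] at hfin
    have hlin : (n : ℤ) ≤ 2 * e1 + k' := by
      have : c ≤ k' := by omega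
      push_cast
      omega
    have h2a : 2 * (e1 : ℤ) ≤ n := by push_cast; omega
    have hnk : 8 * (k' : ℤ) + 8 ≤ n := by
      have : 8 * (k' + 1) ≤ n := by omega
      push_cast
      omega
    have hgoal : (n : ℤ) * k' < e1 * e1 := by
      nlinarith [mul_le_mul hlin hlin (by positivity) (by positivity),
        mul_le_mul h2a (le_refl (k' : ℤ)) (by positivity) (by positivity),
        sq_nonneg ((e1 : ℤ) - k')]
    have hfin' : (e1 : ℤ) * e1 ≤ n * k' := by exact_mod_cast hfin
    omega
  · refine ⟨0, by omega, ?_⟩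
    calc n / 8 ≤ c := hck
      _ ≤ _ := by
        apply Finset.card_le_card
        intro i hi
        rw [Finset.mem_filter] at hi ⊢
        rw [Finset.mem_range] at hi
        refine ⟨by rw [Finset.mem_range]; omega, by omega, ?_⟩
        rw [Nat.add_zero]
        exact hi.2

lemma memB_iff (n : ℕ) (L : Finset (Fin n × Bool)) (i : ℕ) (bb : Bool) :
    memB n L i bb = true ↔ ∃ h : i < n, ((⟨i, h⟩ : Fin n), bb) ∈ L := by
  unfold memB
  by_cases h : i < n
  · rw [dif_pos h]
    simp [h]
  · rw [dif_neg h]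
    simp [h]

lemma cardFilterEq (n : ℕ) (L : Finset (Fin n × Bool)) (bb : Bool) :
    ((Finset.range n).filter (fun i => memB n L i bb = true)).card
      = (L.filter (fun x => x.2 = bb)).card := by
  have ha : (Finset.range n).filter (fun i => memB n L i bb = true)
      = (Finset.univ.filter (fun i : Fin n => (i, bb) ∈ L)).image Fin.val := by
    ext m
    rw [Finset.mem_filter, Finset.mem_image, Finset.mem_range]
    constructor
    · rintro ⟨hm, hmem⟩
      rw [memB_iff] at hmem
      obtain ⟨hlt, hmem⟩ := hmem
      exact ⟨⟨m, hlt⟩, Finset.mem_filter.mpr ⟨Finset.mem_univ _, hmem⟩, rfl⟩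
    · rintro ⟨i, hi, rfl⟩
      refine ⟨i.isLt, ?_⟩
      rw [memB_iff]
      exact ⟨i.isLt, by rw [Fin.eta]; exact (Finset.mem_filter.mp hi).2⟩
  have hb : L.filter (fun x => x.2 = bb)
      = (Finset.univ.filter (fun i : Fin n => (i, bb) ∈ L)).image (fun i => (i, bb)) := by
    ext x
    rw [Finset.mem_filter, Finset.mem_image]
    constructor
    · rintro ⟨hxL, hx2⟩
      refine ⟨x.1, Finset.mem_filter.mpr ⟨Finset.mem_univ _, ?_⟩, ?_⟩
      · rw [show (x.1, bb) = x from Prod.ext rfl hx2.symm]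
        exact hxL
      · exact Prod.ext rfl hx2.symm
    · rintro ⟨i, hi, rfl⟩
      exact ⟨(Finset.mem_filter.mp hi).2, rfl⟩
  rw [ha, hb, Finset.card_image_of_injective _ Fin.val_injective,
    Finset.card_image_of_injective]
  intro a b hab
  rw [Prod.mk.injEq] at hab
  exact hab.1

lemma cardUnivLt (m k : ℕ) (hk : k ≤ m) :
    (Finset.univ.filter (fun y : Fin m => (y : ℕ) < k)).card = k := by
  have hcond : ∀ a ∈ Finset.range k, a < m := fun a ha => by
    have := Finset.mem_range.mp ha; omega
  have heq : Finset.univ.filter (fun y : Fin m => (y : ℕ) < k)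
      = (Finset.range k).attachFin hcond := by
    ext y
    rw [Finset.mem_filter, Finset.mem_attachFin, Finset.mem_range]
    simp
  rw [heq, Finset.card_attachFin, Finset.card_range]

lemma cardL (n : ℕ) (L : Finset (Fin n × Bool))
    (π : Fin (2 * n) ≃ (Fin n × Bool))
    (hLdef : L = Finset.univ.filter (fun x => ((π.symm x : Fin (2 * n)) : ℕ) < n)) :
    L.card = n := by
  have hmap : L = (Finset.univ.filter (fun y : Fin (2 * n) => (y : ℕ) < n)).map
      π.toEmbedding := by
    rw [hLdef]
    ext x
    simp [Finset.mem_map_equiv]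
  rw [hmap, Finset.card_map]
  exact cardUnivLt (2 * n) n (by omega)

lemma cardSplit (n : ℕ) (L : Finset (Fin n × Bool)) :
    (L.filter (fun x => x.2 = false)).card + (L.filter (fun x => x.2 = true)).card
      = L.card := by
  have h1 := Finset.card_filter_add_card_filter_not
    (s := L) (p := fun x => x.2 = false)
  have h2 : L.filter (fun x => ¬ x.2 = false) = L.filter (fun x => x.2 = true) := by
    apply Finset.filter_congr
    intro x _
    simp
  rw [← h1, h2]

theorem stmt_13 (n N : ℕ) (hn : 4 ≤ n)
    (π : Fin (2 * n) ≃ (Fin n × Bool))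
    (L : Finset (Fin n × Bool))
    (hLdef : L = Finset.univ.filter (fun x => ((π.symm x : Fin (2 * n)) : ℕ) < n))
    (h : ({x // x ∈ L} → Bool) → Fin N)
    (hh : ∀ l l', h l = h l' → ∀ (r : {x // x ∈ Lᶜ} → Bool) (D : Fin (n + 1)),
      sAddHigh (fun i => combine L l r (i, false))
          (fun i => combine L l r (i, true)) D
        = sAddHigh (fun i => combine L l' r (i, false))
            (fun i => combine L l' r (i, true)) D) :
    N ≥ 2 ^ (n / 8) := by
  by_cases hk0 : n / 8 = 0
  · rw [hk0, pow_zero]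
    have := (h (fun _ => false)).isLt
    omega
  · have hn8 : 8 ≤ n := by omega
    have hFG : ((Finset.range n).filter (fun i => memB n L i false = true)).card
        + ((Finset.range n).filter (fun i => memB n L i true = true)).card = n := by
      rw [cardFilterEq, cardFilterEq, cardSplit, cardL n L π hLdef]
    obtain ⟨d, hd, hIcard⟩ := counting n (fun i => memB n L i false)
      (fun i => memB n L i true) hn8 hFG
    set I := (Finset.range n).filter
      (fun i => i + d < n ∧ ¬ (memB n L i false = memB n L (i + d) true)) with hIdef
    have hIprop : ∀ i ∈ I, i + d < n ∧ memB n L i false = !(memB n L (i + d) true) := by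
      intro i hi
      rw [hIdef, Finset.mem_filter] at hi
      refine ⟨hi.2.1, ?_⟩
      have := hi.2.2
      cases hA : memB n L i false <;> cases hB : memB n L (i + d) true <;>
        simp_all
    -- fooling family
    have hinj : Function.Injective
        (fun X : {x // x ∈ I} → Bool =>
          h (fun x : {x // x ∈ L} => wLo I d (chif I X) x.1.1.val x.1.2)) := by
      intro X Y hXY
      by_contra hne
      have hex : ∃ q, X q ≠ Y q := Function.ne_iff.mp hne
      obtain ⟨qw, hqw⟩ := hex
      have hDS : (Finset.univ.filter (fun q : {x // x ∈ I} => ¬ (X q = Y q))).Nonempty :=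
        ⟨qw, Finset.mem_filter.mpr ⟨Finset.mem_univ _, hqw⟩⟩
      have himgne : ((Finset.univ.filter (fun q : {x // x ∈ I} => ¬ (X q = Y q))).image
          (fun q => q.1)).Nonempty := hDS.image _
      set pv := ((Finset.univ.filter (fun q : {x // x ∈ I} => ¬ (X q = Y q))).image
          (fun q => q.1)).max' himgne with hpv
      have hpvmem := Finset.max'_mem _ himgne
      rw [← hpv] at hpvmem
      obtain ⟨q0, hq0, hq0v⟩ := Finset.mem_image.mp hpvmem
      have hq0ne : ¬ (X q0 = Y q0) := (Finset.mem_filter.mp hq0).2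
      have hpvI : pv ∈ I := hq0v ▸ q0.2
      have hmax : ∀ q : {x // x ∈ I}, ¬ (X q = Y q) → (q : ℕ) ≤ pv := by
        intro q hq
        apply Finset.le_max'
        exact Finset.mem_image.mpr ⟨q, Finset.mem_filter.mpr ⟨Finset.mem_univ _, hq⟩, rfl⟩
      have hagree : ∀ j ∈ I, pv < j → chif I Y j = chif I X j := by
        intro j hj hlt
        unfold chif
        rw [dif_pos hj, dif_pos hj]
        by_contra hne2
        have := hmax ⟨j, hj⟩ (fun hE => hne2 (by rw [hE]))
        simp only at this
        omega
      have heq := hh (fun x : {x // x ∈ L} => wLo I d (chif I X) x.1.1.val x.1.2)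
        (fun x : {x // x ∈ L} => wLo I d (chif I Y) x.1.1.val x.1.2) hXY
        (fun x : {x // x ∈ Lᶜ} => wHi I d pv (chif I X) x.1.1.val x.1.2)
        ⟨d, by omega⟩
      have hcv1 : (fun i : Fin n => combine L
          (fun x : {x // x ∈ L} => wLo I d (chif I X) x.1.1.val x.1.2)
          (fun x : {x // x ∈ Lᶜ} => wHi I d pv (chif I X) x.1.1.val x.1.2) (i, false))
          = fun i : Fin n => vfun n L I d pv (chif I X) (chif I X) i.val false :=
        funext fun i => combine_eq_s13 n L I d pv (chif I X) (chif I X) i false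
      have hcv2 : (fun i : Fin n => combine L
          (fun x : {x // x ∈ L} => wLo I d (chif I X) x.1.1.val x.1.2)
          (fun x : {x // x ∈ Lᶜ} => wHi I d pv (chif I X) x.1.1.val x.1.2) (i, true))
          = fun i : Fin n => vfun n L I d pv (chif I X) (chif I X) i.val true :=
        funext fun i => combine_eq_s13 n L I d pv (chif I X) (chif I X) i true
      have hcv3 : (fun i : Fin n => combine L
          (fun x : {x // x ∈ L} => wLo I d (chif I Y) x.1.1.val x.1.2)
          (fun x : {x // x ∈ Lᶜ} => wHi I d pv (chif I X) x.1.1.val x.1.2) (i, false))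
          = fun i : Fin n => vfun n L I d pv (chif I Y) (chif I X) i.val false :=
        funext fun i => combine_eq_s13 n L I d pv (chif I Y) (chif I X) i false
      have hcv4 : (fun i : Fin n => combine L
          (fun x : {x // x ∈ L} => wLo I d (chif I Y) x.1.1.val x.1.2)
          (fun x : {x // x ∈ Lᶜ} => wHi I d pv (chif I X) x.1.1.val x.1.2) (i, true))
          = fun i : Fin n => vfun n L I d pv (chif I Y) (chif I X) i.val true :=
        funext fun i => combine_eq_s13 n L I d pv (chif I Y) (chif I X) i true
      rw [hcv1, hcv2, hcv3, hcv4] at heq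
      rw [core n L I d pv (chif I X) (chif I X) (by omega) hd hIprop hpvI
        (fun q _ _ => rfl) _ rfl] at heq
      rw [core n L I d pv (chif I Y) (chif I X) (by omega) hd hIprop hpvI
        hagree _ rfl] at heq
      apply hq0ne
      have hXpv : chif I X pv = X q0 := by
        unfold chif
        rw [dif_pos hpvI]
        congr 1
        exact Subtype.ext hq0v.symm
      have hYpv : chif I Y pv = Y q0 := by
        unfold chif
        rw [dif_pos hpvI]
        congr 1
        exact Subtype.ext hq0v.symm
      rw [← hXpv, ← hYpv]
      exact Bool.not_inj heq
    have hcard2 : 2 ^ I.card ≤ N := by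
      have hc := Fintype.card_le_of_injective _ hinj
      rwa [Fintype.card_fun, Fintype.card_coe, Fintype.card_fin, Fintype.card_bool] at hc
    calc 2 ^ (n / 8) ≤ 2 ^ I.card := Nat.pow_le_pow_right (by norm_num) hIcard
      _ ≤ N := hcard2
end
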